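/- Let P and Q be probability measures on a measurable space and A any measurable event. Then P(A) + Q(A^c) >= (1/2)*exp(-KL(P,Q)), where KL(P,Q) is the Kullback-Leibler divergence. -/

import Mathlib

open MeasureTheory Real

section Aux

variable {Ω : Type*} [MeasurableSpace Ω] (P Q : Measure Ω)
  [IsProbabilityMeasure P] [IsProbabilityMeasure Q]

/-- Integrability of `exp (-llr/2)` with respect to `P`. -/
lemma bh_integrable_exp_half (hPQ : P ≪ Q) :
    Integrable (fun ω ↦ Real.exp (-llr P Q ω / 2)) P := by
  have hmeas : AEStronglyMeasurable (fun ω ↦ Real.exp (-llr P Q ω / 2)) P :=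
    (((measurable_llr P Q).neg.div_const 2).exp).aestronglyMeasurable
  have hint2 : Integrable (fun ω ↦ (1 + Real.exp (-llr P Q ω)) / 2) P := by
    have : Integrable (fun ω ↦ Real.exp (-llr P Q ω)) P := by
      refine Integrable.congr ?_ (exp_neg_llr hPQ).symm
      exact Measure.integrable_toReal_rnDeriv
    exact ((integrable_const 1).add this).div_const 2
  refine hint2.mono' hmeas ?_
  filter_upwards with ω
  have h1 : Real.exp (-llr P Q ω / 2) * Real.exp (-llr P Q ω / 2)
      = Real.exp (-llr P Q ω) := by
    rw [← Real.exp_add]; ring_nf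
  have h2 : (0:ℝ) < Real.exp (-llr P Q ω / 2) := Real.exp_pos _
  rw [Real.norm_of_nonneg h2.le]
  nlinarith [sq_nonneg (1 - Real.exp (-llr P Q ω / 2))]

/-- Jensen step plus change of measure: `exp(-KL/2) ≤ ∫ √(dP/dQ) dQ`. -/
lemma bh_exp_le_integral_sqrt (hPQ : P ≪ Q) (hint : Integrable (llr P Q) P) :
    Real.exp (-(∫ ω, llr P Q ω ∂P) / 2)
      ≤ ∫ ω, Real.sqrt ((P.rnDeriv Q ω).toReal) ∂Q := by
  have hintexp := bh_integrable_exp_half P Q hPQ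
  -- Jensen
  have hJ : Real.exp (∫ ω, -llr P Q ω / 2 ∂P)
      ≤ ∫ ω, Real.exp (-llr P Q ω / 2) ∂P := by
    have := convexOn_exp.map_integral_le (μ := P) (f := fun ω ↦ -llr P Q ω / 2)
      Real.continuous_exp.continuousOn isClosed_univ
      (Filter.Eventually.of_forall fun _ ↦ Set.mem_univ _)
      ((hint.neg).div_const 2) (by exact hintexp)
    exact this
  have hintegral : ∫ ω, -llr P Q ω / 2 ∂P = -(∫ ω, llr P Q ω ∂P) / 2 := by
    rw [integral_div, integral_neg]
  rw [← hintegral]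
  refine hJ.trans ?_
  -- change of measure
  have hch : ∫ ω, Real.exp (-llr P Q ω / 2) ∂P
      = ∫ ω, (P.rnDeriv Q ω).toReal • Real.exp (-llr P Q ω / 2) ∂Q :=
    (integral_rnDeriv_smul hPQ).symm
  rw [hch]
  refine le_of_eq (integral_congr_ae ?_)
  filter_upwards [Measure.rnDeriv_lt_top P Q] with ω hω
  set t : ℝ := (P.rnDeriv Q ω).toReal with ht
  have ht0 : 0 ≤ t := ENNReal.toReal_nonneg
  rcases eq_or_lt_of_le ht0 with h0 | hpos
  · simp [smul_eq_mul, ← h0]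
  · have hllr : llr P Q ω = Real.log t := rfl
    have hsq : Real.sqrt t * Real.sqrt t = t := Real.mul_self_sqrt ht0
    have hsqpos : 0 < Real.sqrt t := Real.sqrt_pos.mpr hpos
    have : Real.exp (-llr P Q ω / 2) = (Real.sqrt t)⁻¹ := by
      rw [hllr, neg_div, ← Real.log_sqrt ht0, ← Real.log_inv,
        Real.exp_log (inv_pos.mpr hsqpos)]
    rw [smul_eq_mul, this]
    field_simp
    rw [Real.sq_sqrt ht0]

/-- Cauchy–Schwarz step: `∫_S √(dP/dQ) dQ ≤ √(P S) √(Q S)`. -/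
lemma bh_setIntegral_sqrt_le (hPQ : P ≪ Q) {S : Set Ω} (_hS : MeasurableSet S) :
    ∫ ω in S, Real.sqrt ((P.rnDeriv Q ω).toReal) ∂Q
      ≤ Real.sqrt ((P S).toReal) * Real.sqrt ((Q S).toReal) := by
  set t : Ω → ℝ := fun ω ↦ (P.rnDeriv Q ω).toReal with ht
  have htmeas : AEStronglyMeasurable (fun ω ↦ Real.sqrt (t ω)) (Q.restrict S) :=
    ((Measure.measurable_rnDeriv P Q).ennreal_toReal.sqrt).aestronglyMeasurable
  have htsq : ∀ ω, Real.sqrt (t ω) ^ 2 = t ω := fun ω ↦ Real.sq_sqrt ENNReal.toReal_nonneg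
  have htint : Integrable t (Q.restrict S) :=
    Measure.integrable_toReal_rnDeriv.restrict
  have hf2 : MemLp (fun ω ↦ Real.sqrt (t ω)) 2 (Q.restrict S) := by
    rw [memLp_two_iff_integrable_sq htmeas]
    exact htint.congr (Filter.Eventually.of_forall fun ω ↦ (htsq ω).symm)
  have hg2 : MemLp (fun _ : Ω ↦ (1:ℝ)) 2 (Q.restrict S) := memLp_const 1
  have hpq : Real.HolderConjugate 2 2 := Real.holderConjugate_iff.mpr ⟨one_lt_two, by norm_num⟩
  have hCS := integral_mul_le_Lp_mul_Lq_of_nonneg (μ := Q.restrict S) hpq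
    (Filter.Eventually.of_forall fun ω ↦ Real.sqrt_nonneg (t ω))
    (Filter.Eventually.of_forall fun _ ↦ zero_le_one)
    (by simpa using hf2) (by simpa using hg2)
  simp only [mul_one, Real.one_rpow] at hCS
  have h1 : ∫ ω in S, Real.sqrt (t ω) ^ (2:ℝ) ∂Q = (P S).toReal := by
    rw [show ((2:ℝ)) = ((2:ℕ):ℝ) by norm_num]
    simp_rw [Real.rpow_natCast]
    simp_rw [htsq]
    exact Measure.setIntegral_toReal_rnDeriv hPQ S
  have h2 : ∫ _ω in S, (1:ℝ) ∂Q = (Q S).toReal := by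
    simp [Measure.restrict_apply_univ, Measure.real]
  rw [h1, h2] at hCS
  calc ∫ ω in S, Real.sqrt (t ω) ∂Q
      ≤ (P S).toReal ^ (1/2 : ℝ) * (Q S).toReal ^ (1/2 : ℝ) := hCS
    _ = Real.sqrt ((P S).toReal) * Real.sqrt ((Q S).toReal) := by
        rw [← Real.sqrt_eq_rpow, ← Real.sqrt_eq_rpow]

end Aux

set_option maxHeartbeats 1000000 in
/-- Bretagnolle–Huber inequality: for probability measures `P, Q` and any measurable event
`A`, `P(A) + Q(Aᶜ) ≥ (1/2) exp(-KL(P, Q))`, where `KL(P, Q) = ∫ log (dP/dQ) dP`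
(the case `KL = +∞`, i.e. `¬ P ≪ Q` or non-integrable log-likelihood ratio, is trivial). -/
theorem bretagnolle_huber {Ω : Type*} [MeasurableSpace Ω] (P Q : Measure Ω)
    [IsProbabilityMeasure P] [IsProbabilityMeasure Q]
    (hPQ : P ≪ Q) (hint : Integrable (llr P Q) P)
    (A : Set Ω) (hA : MeasurableSet A) :
    (P A).toReal + (Q Aᶜ).toReal ≥ (1 / 2) * Real.exp (-∫ ω, llr P Q ω ∂P) := by
  set t : Ω → ℝ := fun ω ↦ (P.rnDeriv Q ω).toReal with ht
  have hsqint : Integrable (fun ω ↦ Real.sqrt (t ω)) Q := by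
    have htmeas : AEStronglyMeasurable (fun ω ↦ Real.sqrt (t ω)) Q :=
      ((Measure.measurable_rnDeriv P Q).ennreal_toReal.sqrt).aestronglyMeasurable
    have htint : Integrable t Q := Measure.integrable_toReal_rnDeriv
    have hbi : Integrable (fun ω ↦ (1 + t ω) / 2) Q := by
      exact ((integrable_const 1).add htint).div_const 2
    refine hbi.mono' htmeas ?_
    filter_upwards with ω
    have h0 : (0:ℝ) ≤ t ω := ENNReal.toReal_nonneg
    rw [Real.norm_of_nonneg (Real.sqrt_nonneg _)]
    nlinarith [sq_nonneg (1 - Real.sqrt (t ω)), Real.sq_sqrt h0]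
  have hsplit : ∫ ω, Real.sqrt (t ω) ∂Q
      = (∫ ω in A, Real.sqrt (t ω) ∂Q) + ∫ ω in Aᶜ, Real.sqrt (t ω) ∂Q :=
    (integral_add_compl hA hsqint).symm
  have hJ := bh_exp_le_integral_sqrt P Q hPQ hint
  have hCS1 := bh_setIntegral_sqrt_le P Q hPQ hA
  have hCS2 := bh_setIntegral_sqrt_le P Q hPQ hA.compl
  set a := (P A).toReal
  set b := (Q A).toReal
  set c := (P Aᶜ).toReal
  set d := (Q Aᶜ).toReal
  have hK : Real.exp (-(∫ ω, llr P Q ω ∂P) / 2)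
      ≤ Real.sqrt a * Real.sqrt b + Real.sqrt c * Real.sqrt d := by
    rw [hsplit] at hJ
    exact hJ.trans (add_le_add hCS1 hCS2)
  set K := Real.exp (-(∫ ω, llr P Q ω ∂P) / 2) with hKdef
  have hK2 : K * K = Real.exp (-∫ ω, llr P Q ω ∂P) := by
    rw [hKdef, ← Real.exp_add]; ring_nf
  have hKpos : 0 < K := Real.exp_pos _
  have hb1 : b ≤ 1 := by
    have := prob_le_one (μ := Q) (s := A)
    simpa [b] using ENNReal.toReal_le_of_le_ofReal zero_le_one (by simpa using this)
  have hc1 : c ≤ 1 := by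
    have := prob_le_one (μ := P) (s := Aᶜ)
    simpa [c] using ENNReal.toReal_le_of_le_ofReal zero_le_one (by simpa using this)
  have ha0 : 0 ≤ a := ENNReal.toReal_nonneg
  have hb0 : 0 ≤ b := ENNReal.toReal_nonneg
  have hc0 : 0 ≤ c := ENNReal.toReal_nonneg
  have hd0 : 0 ≤ d := ENNReal.toReal_nonneg
  rw [ge_iff_le, ← hK2]
  have hsa := Real.mul_self_sqrt ha0
  have hsb := Real.mul_self_sqrt hb0
  have hsc := Real.mul_self_sqrt hc0
  have hsd := Real.mul_self_sqrt hd0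
  have hprod : K * K ≤ (Real.sqrt a * Real.sqrt b + Real.sqrt c * Real.sqrt d) *
      (Real.sqrt a * Real.sqrt b + Real.sqrt c * Real.sqrt d) :=
    mul_le_mul hK hK hKpos.le (by positivity)
  have hab : (Real.sqrt a * Real.sqrt b) * (Real.sqrt a * Real.sqrt b) = a * b := by
    rw [mul_mul_mul_comm, hsa, hsb]
  have hcd : (Real.sqrt c * Real.sqrt d) * (Real.sqrt c * Real.sqrt d) = c * d := by
    rw [mul_mul_mul_comm, hsc, hsd]
  have hcross : 2 * (Real.sqrt a * Real.sqrt b) * (Real.sqrt c * Real.sqrt d)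
      ≤ a * c + d * b := by
    nlinarith [sq_nonneg (Real.sqrt a * Real.sqrt c - Real.sqrt d * Real.sqrt b),
      hsa, hsb, hsc, hsd, mul_mul_mul_comm (Real.sqrt a) (Real.sqrt c) (Real.sqrt a)
        (Real.sqrt c), mul_mul_mul_comm (Real.sqrt d) (Real.sqrt b) (Real.sqrt d)
        (Real.sqrt b)]
  have hlast : (a + d) * (2 - b - c) ≥ 0 :=
    mul_nonneg (by linarith) (by linarith)
  nlinarith [hprod, hab, hcd, hcross, hlast]
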